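/- Let H : I → ℝ be continuous, η = ±1, and constants c₁, c₂ with (F(s)−c₁)² + (G(s)+c₂)² > 0 for all s ∈ I, where F(s) = ∫₀^s sin(2∫₀^t H) dt and G(s) = ∫₀^s cos(2∫₀^t H) dt. Define y(s) = √((F−c₁)² + (G+c₂)²) and x'(s) = (F'(G+c₂) − G'(F−c₁))/y. Then x'² + y'² = 1, i.e. the curve γ(s) = (x(s), y(s)) is unit-speed. -/

import Mathlib

open intervalIntegral

/-- For continuous `H`, `η = ±1`, constants `c₁, c₂` with `(F−c₁)² + (G+c₂)² > 0`,
where `F = ∫₀^s sin(2∫₀^t H)` and `G = ∫₀^s cos(2∫₀^t H)`, the curve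
`γ = (x, y)` with `y = √((F−c₁)² + (G+c₂)²)` and
`x' = (F'(G+c₂) − G'(F−c₁))/y` is unit-speed: `x'² + y'² = 1`. -/
theorem prescribed_H_generating_curve_unit_speed (H : ℝ → ℝ) (hH : Continuous H)
    (η c₁ c₂ : ℝ) (hη : η = 1 ∨ η = -1)
    (F G y x' y' : ℝ → ℝ)
    (hF : F = fun s => ∫ t in (0:ℝ)..s, Real.sin (2 * ∫ u in (0:ℝ)..t, H u))
    (hG : G = fun s => ∫ t in (0:ℝ)..s, Real.cos (2 * ∫ u in (0:ℝ)..t, H u))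
    (hpos : ∀ s, 0 < (F s - c₁) ^ 2 + (G s + c₂) ^ 2)
    (hy : y = fun s => Real.sqrt ((F s - c₁) ^ 2 + (G s + c₂) ^ 2))
    (hx' : x' = fun s =>
      (Real.sin (2 * ∫ u in (0:ℝ)..s, H u) * (G s + c₂)
        - Real.cos (2 * ∫ u in (0:ℝ)..s, H u) * (F s - c₁)) / y s)
    (hy' : ∀ s, HasDerivAt y (y' s) s) :
    ∀ s, x' s ^ 2 + y' s ^ 2 = 1 := by
  intro s
  -- primitive of H is continuous
  have hprim : Continuous (fun t => ∫ u in (0:ℝ)..t, H u) :=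
    intervalIntegral.continuous_primitive (fun a b => hH.intervalIntegrable a b) 0
  have hsin : Continuous (fun t => Real.sin (2 * ∫ u in (0:ℝ)..t, H u)) :=
    Real.continuous_sin.comp (continuous_const.mul hprim)
  have hcos : Continuous (fun t => Real.cos (2 * ∫ u in (0:ℝ)..t, H u)) :=
    Real.continuous_cos.comp (continuous_const.mul hprim)
  set cs := Real.sin (2 * ∫ u in (0:ℝ)..s, H u) with hcs
  set cc := Real.cos (2 * ∫ u in (0:ℝ)..s, H u) with hcc
  have hFd : HasDerivAt F cs s := by
    rw [hF]
    exact intervalIntegral.integral_hasDerivAt_right (hsin.intervalIntegrable 0 s)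
      (hsin.stronglyMeasurableAtFilter _ _) hsin.continuousAt
  have hGd : HasDerivAt G cc s := by
    rw [hG]
    exact intervalIntegral.integral_hasDerivAt_right (hcos.intervalIntegrable 0 s)
      (hcos.stronglyMeasurableAtFilter _ _) hcos.continuousAt
  have hqd : HasDerivAt (fun t => (F t - c₁) ^ 2 + (G t + c₂) ^ 2)
      (2 * (F s - c₁) * cs + 2 * (G s + c₂) * cc) s := by
    have h1 : HasDerivAt (fun t => (F t - c₁) ^ 2) (2 * (F s - c₁) * cs) s := by
      have := ((hFd.sub_const c₁).fun_pow 2)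
      simpa [mul_comm, mul_assoc, mul_left_comm] using this
    have h2 : HasDerivAt (fun t => (G t + c₂) ^ 2) (2 * (G s + c₂) * cc) s := by
      have := ((hGd.add_const c₂).fun_pow 2)
      simpa [mul_comm, mul_assoc, mul_left_comm] using this
    exact h1.add h2
  have hqne : (F s - c₁) ^ 2 + (G s + c₂) ^ 2 ≠ 0 := (hpos s).ne'
  have hyd : HasDerivAt y
      ((2 * (F s - c₁) * cs + 2 * (G s + c₂) * cc) /
        (2 * Real.sqrt ((F s - c₁) ^ 2 + (G s + c₂) ^ 2))) s := by
    rw [hy]; exact hqd.sqrt hqne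
  have hy's : y' s = (2 * (F s - c₁) * cs + 2 * (G s + c₂) * cc) /
      (2 * Real.sqrt ((F s - c₁) ^ 2 + (G s + c₂) ^ 2)) := (hy' s).unique hyd
  have hys : y s = Real.sqrt ((F s - c₁) ^ 2 + (G s + c₂) ^ 2) := by rw [hy]
  have hypos : 0 < y s := by rw [hys]; exact Real.sqrt_pos.mpr (hpos s)
  have hysq : y s ^ 2 = (F s - c₁) ^ 2 + (G s + c₂) ^ 2 := by
    rw [hys]; exact Real.sq_sqrt (hpos s).le
  have hpyth : cs ^ 2 + cc ^ 2 = 1 := Real.sin_sq_add_cos_sq _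
  rw [hx']
  simp only [← hcs, ← hcc, ← hys, hy's]
  field_simp
  linear_combination ((F s - c₁) ^ 2 + (G s + c₂) ^ 2) * hpyth - hysq
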